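/- Let χ : Cl_F^+(𝔤) → ℂ^× be a primitive finite Hecke character of conductor 𝔤 (it does not factor through Cl_F^+(𝔤') for any 𝔤' ⊋ 𝔤). If ξ ∈ 𝕋^𝔞[𝔤] is a non-primitive torsion point (ξ factors through 𝔞/𝔤'𝔞 for some 𝔤' ⊋ 𝔤), then c_χ(ξ) = 0, where c_χ(ξ) := N𝔤^{-1} ∑_{β ∈ 𝔞/𝔤𝔞} χ_𝔞(β) ξ(-β). -/

import Mathlib

open scoped nonZeroDivisors
open NumberField FractionalIdeal

/-- `x ∈ F` is totally positive: every real embedding sends it to a positive real. -/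
def IsTotPos (F : Type*) [Field F] (x : F) : Prop := ∀ τ : F →+* ℝ, 0 < τ x

lemma finite_real_embeddings (F : Type*) [Field F] [NumberField F] :
    Finite (F →+* ℝ) := by
  have hinj : Function.Injective (fun τ : F →+* ℝ => (Complex.ofRealHom.comp τ)) := by
    intro a b h
    ext x
    exact Complex.ofReal_injective (RingHom.congr_fun h x)
  exact Finite.of_injective _ hinj

lemma exists_nat_mem {F : Type*} [Field F] [NumberField F]
    (J : FractionalIdeal (𝓞 F)⁰ F) (hJ : J ≠ 0) :
    ∃ q : ℕ, 0 < q ∧ ((q : F) ∈ J) := by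
  obtain ⟨z, hzJ, hz0⟩ : ∃ z, z ∈ J ∧ z ≠ 0 := by
    by_contra h
    push_neg at h
    apply hJ
    ext x
    simp only [FractionalIdeal.mem_zero_iff]
    exact ⟨fun hx => h x hx, fun hx => by rw [hx]; exact zero_mem ((J : Submodule (𝓞 F) F))⟩
  obtain ⟨x, y, hy, hxy⟩ := IsFractionRing.div_surjective (A := 𝓞 F) z
  have hy0 : algebraMap (𝓞 F) F y ≠ 0 :=
    IsFractionRing.to_map_ne_zero_of_mem_nonZeroDivisors hy
  have hw : algebraMap (𝓞 F) F x ∈ J := by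
    have : algebraMap (𝓞 F) F x = y • z := by
      rw [Algebra.smul_def, ← hxy, mul_div_cancel₀ _ hy0]
    rw [this, ← FractionalIdeal.mem_coe]
    exact Submodule.smul_mem _ _ (FractionalIdeal.mem_coe.2 hzJ)
  have hx0 : x ≠ 0 := by
    intro h
    rw [h, _root_.map_zero] at hw
    apply hz0
    rw [← hxy, h, _root_.map_zero, zero_div]
  refine ⟨Ideal.absNorm (Ideal.span {x}), ?_, ?_⟩
  · rw [Nat.pos_iff_ne_zero, Ne, Ideal.absNorm_eq_zero_iff, Ideal.span_singleton_eq_bot]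
    exact hx0
  · have hmem : ((Ideal.absNorm (Ideal.span {x}) : ℕ) : 𝓞 F) ∈ Ideal.span {x} :=
      Ideal.absNorm_mem _
    obtain ⟨t, ht⟩ := Ideal.mem_span_singleton'.1 hmem
    have : ((Ideal.absNorm (Ideal.span {x}) : ℕ) : F) = t • algebraMap (𝓞 F) F x := by
      rw [Algebra.smul_def, ← _root_.map_mul, ht, map_natCast]
    rw [this, ← FractionalIdeal.mem_coe]
    exact Submodule.smul_mem _ _ (FractionalIdeal.mem_coe.2 hw)

lemma exists_totpos_coset {F : Type*} [Field F] [NumberField F]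
    (J : FractionalIdeal (𝓞 F)⁰ F) (hJ : J ≠ 0) (x : F) :
    ∃ γ ∈ J, IsTotPos F (x + γ) := by
  obtain ⟨q, hq0, hqJ⟩ := exists_nat_mem J hJ
  have : Finite (F →+* ℝ) := finite_real_embeddings F
  have hfin : (Set.range fun τ : F →+* ℝ => -τ x).Finite := Set.finite_range _
  obtain ⟨C, hC⟩ := hfin.bddAbove
  obtain ⟨n, hn⟩ := exists_nat_gt C
  refine ⟨((n * q : ℕ) : F), ?_, ?_⟩
  · have : ((n * q : ℕ) : F) = (n : 𝓞 F) • ((q : ℕ) : F) := by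
      rw [Algebra.smul_def, map_natCast]
      push_cast
      ring
    rw [this, ← FractionalIdeal.mem_coe]
    exact Submodule.smul_mem _ _ (FractionalIdeal.mem_coe.2 hqJ)
  · intro τ
    have h1 : -τ x ≤ C := hC (Set.mem_range_self τ)
    have h2 : (n : ℝ) ≤ (n * q : ℕ) := by
      push_cast
      nlinarith [Nat.one_le_cast (α := ℝ) |>.2 hq0]
    have : -τ x < ((n * q : ℕ) : ℝ) := lt_of_le_of_lt h1 (lt_of_lt_of_le hn h2)
    rw [_root_.map_add, map_natCast]
    linarith

/-- **Vanishing of `c_χ(ξ)` for a primitive `χ` at a non-primitive `ξ`.**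
`F` totally real, `𝔤 ≠ 0` an integral ideal, `χ` a primitive Hecke character of conductor
`𝔤` (it does not factor through `Cl_F^+(𝔤'')` for any `𝔤'' ⊋ 𝔤`), and `ξ ∈ 𝕋^𝔞[𝔤]` a
non-primitive torsion point, i.e. `ξ` factors through `𝔞/𝔤'𝔞` for some `𝔤' ⊋ 𝔤`.
Then `c_χ(ξ) = N𝔤⁻¹ ∑_{β ∈ 𝔞/𝔤𝔞} χ_𝔞(β) ξ(−β) = 0`. -/
theorem c_chi_vanishes_at_nonprimitive_torsion
    (F : Type*) [Field F] [NumberField F]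
    (htr : ∀ v : NumberField.InfinitePlace F, v.IsReal)
    (𝔤 : Ideal (𝓞 F)) (h𝔤 : 𝔤 ≠ ⊥)
    (𝔞 : FractionalIdeal (𝓞 F)⁰ F) (h𝔞 : 𝔞 ≠ 0)
    -- `χ`, a finite Hecke character mod `𝔤` on ideals, extended by zero:
    (χ : Ideal (𝓞 F) → ℂ)
    (hχmul : ∀ I J, χ (I * J) = χ I * χ J)
    (hχzero : ∀ I, ¬ IsCoprime I 𝔤 → χ I = 0)
    (hχne : ∀ I, IsCoprime I 𝔤 → χ I ≠ 0)
    (hχray : ∀ y : 𝓞 F, IsTotPos F (y : F) → y - 1 ∈ 𝔤 → χ (Ideal.span {y}) = 1)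
    -- primitivity of `χ`: it does not factor through any `Cl_F^+(𝔤'')`, `𝔤'' ⊋ 𝔤`:
    (hχprim : ∀ 𝔤'' : Ideal (𝓞 F), 𝔤 < 𝔤'' →
      ¬ ∀ y : 𝓞 F, IsTotPos F (y : F) → y - 1 ∈ 𝔤'' → IsCoprime (Ideal.span {y}) 𝔤 →
        χ (Ideal.span {y}) = 1)
    -- the induced function `χ_𝔞 : 𝔞/𝔤𝔞 → ℂ`:
    (χa : F → ℂ)
    (hχaper : ∀ α γ : F, γ ∈ (𝔤 : FractionalIdeal (𝓞 F)⁰ F) * 𝔞 → χa (α + γ) = χa α)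
    (hχaval : ∀ α ∈ 𝔞, IsTotPos F α → ∀ I : Ideal (𝓞 F),
      (I : FractionalIdeal (𝓞 F)⁰ F) = 𝔞⁻¹ * spanSingleton (𝓞 F)⁰ α → χa α = χ I)
    -- `ξ`, a `𝔤`-torsion point of `𝕋^𝔞` which is non-primitive: it factors through
    -- `𝔞/𝔤'𝔞` for some `𝔤' ⊋ 𝔤`:
    (ξ : F → ℂ)
    (hξadd : ∀ α ∈ 𝔞, ∀ β ∈ 𝔞, ξ (α + β) = ξ α * ξ β)
    (hξone : ξ 0 = 1)
    (hξper : ∀ α ∈ 𝔞, ∀ γ ∈ (𝔤 : FractionalIdeal (𝓞 F)⁰ F) * 𝔞, ξ (α + γ) = ξ α)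
    (𝔤' : Ideal (𝓞 F)) (h𝔤' : 𝔤 < 𝔤')
    (hξnonprim : ∀ α ∈ 𝔞, ∀ γ ∈ (𝔤' : FractionalIdeal (𝓞 F)⁰ F) * 𝔞, ξ (α + γ) = ξ α)
    -- a set of representatives `B` of `𝔞/𝔤𝔞`:
    (B : Finset F)
    (hB1 : ∀ β ∈ B, β ∈ 𝔞)
    (hB2 : ∀ α ∈ 𝔞, ∃! β, β ∈ B ∧ α - β ∈ (𝔤 : FractionalIdeal (𝓞 F)⁰ F) * 𝔞) :
    ((Ideal.absNorm 𝔤 : ℂ))⁻¹ * ∑ β ∈ B, χa β * ξ (-β) = 0 := by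
  classical
  -- extract a totally positive `y ≡ 1 mod 𝔤'`, coprime to `𝔤`, with `χ(⟨y⟩) ≠ 1`
  have hex := hχprim 𝔤' h𝔤'
  push_neg at hex
  obtain ⟨y, hy_pos, hy_mod, hy_cop, hy_ne⟩ := hex
  set c := χ (Ideal.span {y}) with hc
  set J : FractionalIdeal (𝓞 F)⁰ F := (𝔤 : FractionalIdeal (𝓞 F)⁰ F) * 𝔞 with hJdef
  have hg0 : (𝔤 : FractionalIdeal (𝓞 F)⁰ F) ≠ 0 := by
    rwa [Ne, FractionalIdeal.coeIdeal_eq_zero]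
  have hJ0 : J ≠ 0 := mul_ne_zero hg0 h𝔞
  -- membership helpers
  have hsmul : ∀ (a : 𝓞 F) {K : FractionalIdeal (𝓞 F)⁰ F} {x : F}, x ∈ K →
      algebraMap (𝓞 F) F a * x ∈ K := by
    intro a K x hx
    rw [← Algebra.smul_def, ← FractionalIdeal.mem_coe]
    exact Submodule.smul_mem _ _ (FractionalIdeal.mem_coe.2 hx)
  have hadd : ∀ {K : FractionalIdeal (𝓞 F)⁰ F} {x z : F}, x ∈ K → z ∈ K → x + z ∈ K := by
    intro K x z hx hz
    rw [← FractionalIdeal.mem_coe] at *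
    exact add_mem hx hz
  have hneg : ∀ {K : FractionalIdeal (𝓞 F)⁰ F} {x : F}, x ∈ K → -x ∈ K := by
    intro K x hx
    rw [← FractionalIdeal.mem_coe] at *
    exact neg_mem hx
  have hsub : ∀ {K : FractionalIdeal (𝓞 F)⁰ F} {x z : F}, x ∈ K → z ∈ K → x - z ∈ K := by
    intro K x z hx hz
    rw [← FractionalIdeal.mem_coe] at *
    exact sub_mem hx hz
  have hJle : J ≤ 𝔞 := by
    rw [hJdef]
    refine FractionalIdeal.mul_le.2 ?_
    intro i hi j hj
    obtain ⟨a, _, rfl⟩ := (FractionalIdeal.mem_coeIdeal _).1 hi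
    exact hsmul a hj
  have hy_pos' : ∀ τ : F →+* ℝ, 0 < τ (algebraMap (𝓞 F) F y) := fun τ => hy_pos τ
  -- key A : χa (y β) = c * χa β
  have keyA : ∀ β ∈ 𝔞, χa (algebraMap (𝓞 F) F y * β) = c * χa β := by
    intro β hβ
    obtain ⟨γ, hγJ, hγpos⟩ := exists_totpos_coset J hJ0 β
    have hγa : γ ∈ 𝔞 := hJle hγJ
    have hαa : β + γ ∈ 𝔞 := hadd hβ hγa
    have hle : 𝔞⁻¹ * spanSingleton (𝓞 F)⁰ (β + γ) ≤ 1 := by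
      have h1 : spanSingleton (𝓞 F)⁰ (β + γ) ≤ 𝔞 :=
        FractionalIdeal.spanSingleton_le_iff_mem.2 hαa
      calc 𝔞⁻¹ * spanSingleton (𝓞 F)⁰ (β + γ) ≤ 𝔞⁻¹ * 𝔞 :=
            FractionalIdeal.mul_le.2 fun i hi j hj =>
              FractionalIdeal.mul_mem_mul hi (h1 hj)
        _ = 1 := (mul_comm _ _).trans (mul_inv_cancel₀ h𝔞)
    obtain ⟨I, hI⟩ := FractionalIdeal.le_one_iff_exists_coeIdeal.1 hle
    have hval1 : χa (β + γ) = χ I := hχaval _ hαa hγpos I hI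
    have hypos : IsTotPos F (algebraMap (𝓞 F) F y * (β + γ)) := by
      intro τ
      rw [_root_.map_mul]
      exact mul_pos (hy_pos' τ) (hγpos τ)
    have hyαa : algebraMap (𝓞 F) F y * (β + γ) ∈ 𝔞 := hsmul y hαa
    have hI2 : ((I * Ideal.span {y} : Ideal (𝓞 F)) : FractionalIdeal (𝓞 F)⁰ F)
        = 𝔞⁻¹ * spanSingleton (𝓞 F)⁰ (algebraMap (𝓞 F) F y * (β + γ)) := by
      rw [FractionalIdeal.coeIdeal_mul, hI, FractionalIdeal.coeIdeal_span_singleton,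
        ← FractionalIdeal.spanSingleton_mul_spanSingleton]
      ring
    have hval2 : χa (algebraMap (𝓞 F) F y * (β + γ)) = χ I * c := by
      rw [hχaval _ hyαa hypos _ hI2, hχmul, hc]
    have hper1 : χa (β + γ) = χa β := hχaper β γ hγJ
    have hyγJ : algebraMap (𝓞 F) F y * γ ∈ J := hsmul y hγJ
    have hper2 : χa (algebraMap (𝓞 F) F y * (β + γ)) = χa (algebraMap (𝓞 F) F y * β) := by
      rw [mul_add]
      exact hχaper _ _ hyγJ
    rw [← hper2, hval2, ← hper1, hval1]
    ring
  -- key B : ξ (-(y β)) = ξ (-β)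
  have keyB : ∀ β ∈ 𝔞, ξ (-(algebraMap (𝓞 F) F y * β)) = ξ (-β) := by
    intro β hβ
    have hmem : -(algebraMap (𝓞 F) F (y - 1) * β) ∈ (𝔤' : FractionalIdeal (𝓞 F)⁰ F) * 𝔞 :=
      hneg (FractionalIdeal.mul_mem_mul ((FractionalIdeal.mem_coeIdeal _).2 ⟨y - 1, hy_mod, rfl⟩) hβ)
    have h := hξnonprim (-β) (hneg hβ) _ hmem
    rw [← h]
    congr 1
    rw [_root_.map_sub, _root_.map_one]
    ring
  -- the summand and its periodicity
  set f : F → ℂ := fun x => χa x * ξ (-x) with hf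
  have hfper : ∀ x ∈ 𝔞, ∀ d ∈ J, f (x + d) = f x := by
    intro x hx d hd
    simp only [hf]
    rw [hχaper x d hd]
    congr 1
    have h2 := hξper (-x) (hneg hx) (-d) (hneg hd)
    rw [show -(x + d) = -x + -d by ring]
    exact h2
  have hyB : ∀ β ∈ B, algebraMap (𝓞 F) F y * β ∈ 𝔞 := fun β hβ => hsmul y (hB1 β hβ)
  -- the permutation σ of B induced by multiplication by y
  set σ : F → F := fun β =>
    if h : algebraMap (𝓞 F) F y * β ∈ 𝔞 then ((hB2 _ h).exists).choose else 0 with hσ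
  have hσspec : ∀ β ∈ B, σ β ∈ B ∧ algebraMap (𝓞 F) F y * β - σ β ∈ J := by
    intro β hβ
    have h := hyB β hβ
    simp only [hσ, dif_pos h]
    exact ((hB2 _ h).exists).choose_spec
  -- coprimality gives: y d ∈ J → d ∈ J, for d = β₁ - β₂ with βᵢ ∈ 𝔞
  obtain ⟨i, hiy, j, hjg, hij⟩ := Ideal.isCoprime_iff_exists.1 hy_cop
  obtain ⟨t, ht⟩ := Ideal.mem_span_singleton'.1 hiy
  have hsubJ : ∀ β₁ ∈ 𝔞, ∀ β₂ ∈ 𝔞,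
      algebraMap (𝓞 F) F y * β₁ - algebraMap (𝓞 F) F y * β₂ ∈ J → β₁ - β₂ ∈ J := by
    intro β₁ hβ₁ β₂ hβ₂ h
    have h1 : algebraMap (𝓞 F) F (t * y) * (β₁ - β₂) ∈ J := by
      have he : algebraMap (𝓞 F) F (t * y) * (β₁ - β₂)
          = algebraMap (𝓞 F) F t *
            (algebraMap (𝓞 F) F y * β₁ - algebraMap (𝓞 F) F y * β₂) := by
        rw [_root_.map_mul]; ring
      rw [he]; exact hsmul t h
    have h2 : algebraMap (𝓞 F) F j * (β₁ - β₂) ∈ J :=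
      FractionalIdeal.mul_mem_mul ((FractionalIdeal.mem_coeIdeal _).2 ⟨j, hjg, rfl⟩) (hsub hβ₁ hβ₂)
    have hone : algebraMap (𝓞 F) F (t * y) + algebraMap (𝓞 F) F j = 1 := by
      rw [← _root_.map_add, ht, hij, _root_.map_one]
    have h3 : β₁ - β₂ = algebraMap (𝓞 F) F (t * y) * (β₁ - β₂)
        + algebraMap (𝓞 F) F j * (β₁ - β₂) := by
      calc β₁ - β₂ = (algebraMap (𝓞 F) F (t * y) + algebraMap (𝓞 F) F j) * (β₁ - β₂) := by
            rw [hone]; ring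
        _ = _ := by ring
    rw [h3]; exact hadd h1 h2
  have hσinj : ∀ β₁ ∈ B, ∀ β₂ ∈ B, σ β₁ = σ β₂ → β₁ = β₂ := by
    intro β₁ h₁ β₂ h₂ he
    obtain ⟨hσB₁, hσJ₁⟩ := hσspec β₁ h₁
    obtain ⟨hσB₂, hσJ₂⟩ := hσspec β₂ h₂
    have hyd : algebraMap (𝓞 F) F y * β₁ - algebraMap (𝓞 F) F y * β₂ ∈ J := by
      have hdec : algebraMap (𝓞 F) F y * β₁ - algebraMap (𝓞 F) F y * β₂
          = (algebraMap (𝓞 F) F y * β₁ - σ β₁) - (algebraMap (𝓞 F) F y * β₂ - σ β₂) := by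
        rw [he]; ring
      rw [hdec]; exact hsub hσJ₁ hσJ₂
    have hd : β₁ - β₂ ∈ J := hsubJ β₁ (hB1 _ h₁) β₂ (hB1 _ h₂) hyd
    have hz : β₁ - β₁ ∈ J := by
      rw [sub_self, ← FractionalIdeal.mem_coe]; exact Submodule.zero_mem _
    exact ((hB2 β₁ (hB1 _ h₁)).unique ⟨h₁, hz⟩ ⟨h₂, hd⟩)
  have hσmaps : ∀ β (hβ : β ∈ B), σ β ∈ B := fun β hβ => (hσspec β hβ).1
  have hσsurj := Finset.surj_on_of_inj_on_of_card_le (fun β _ => σ β) hσmaps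
      (fun a₁ a₂ ha₁ ha₂ h => hσinj a₁ ha₁ a₂ ha₂ h) (le_refl B.card)
  have hsum1 : ∑ β ∈ B, f (σ β) = ∑ β ∈ B, f β :=
    Finset.sum_bij (fun β _ => σ β) hσmaps (fun a₁ ha₁ a₂ ha₂ h => hσinj a₁ ha₁ a₂ ha₂ h)
      (fun b hb => by obtain ⟨a, ha, hab⟩ := hσsurj b hb; exact ⟨a, ha, hab.symm⟩)
      (fun a ha => rfl)
  have hsum2 : ∀ β ∈ B, f (σ β) = f (algebraMap (𝓞 F) F y * β) := by
    intro β hβ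
    obtain ⟨hσB, hσJ⟩ := hσspec β hβ
    have hdec : algebraMap (𝓞 F) F y * β = σ β + (algebraMap (𝓞 F) F y * β - σ β) := by ring
    rw [hdec, hfper (σ β) (hB1 _ hσB) _ hσJ]
  have hsum3 : ∀ β ∈ B, f (algebraMap (𝓞 F) F y * β) = c * f β := by
    intro β hβ
    simp only [hf]
    rw [keyA β (hB1 _ hβ), keyB β (hB1 _ hβ)]
    ring
  have hS : ∑ β ∈ B, f β = c * ∑ β ∈ B, f β := by
    calc ∑ β ∈ B, f β = ∑ β ∈ B, f (σ β) := hsum1.symm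
      _ = ∑ β ∈ B, f (algebraMap (𝓞 F) F y * β) := Finset.sum_congr rfl hsum2
      _ = ∑ β ∈ B, c * f β := Finset.sum_congr rfl hsum3
      _ = c * ∑ β ∈ B, f β := (Finset.mul_sum _ _ _).symm
  have hfac : (c - 1) * ∑ β ∈ B, f β = 0 := by
    rw [sub_mul, one_mul, ← hS, sub_self]
  have hS0 : ∑ β ∈ B, f β = 0 := by
    rcases mul_eq_zero.1 hfac with h | h
    · exact absurd (by linear_combination h : c = 1) hy_ne
    · exact h
  have hfin : ∑ β ∈ B, χa β * ξ (-β) = 0 := by simpa [hf] using hS0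
  rw [hfin, mul_zero]
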